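/- The limit lim_{p→∞} (1/√p) · log( (p+1) · ∫_{0}^{∞} e^{-t} · t^p / (1+t)^{p+2} dt ) = −2 holds, where p ranges over the natural numbers tending to infinity. -/

import Mathlib

open MeasureTheory Filter Set


lemma hd_inv : ∀ x ∈ Ici (0:ℝ), HasDerivAt (fun t:ℝ => -(1+t)⁻¹) (((1+x)^2)⁻¹) x := by
  intro x hx
  have h1 : (1:ℝ) + x ≠ 0 := by simp at hx; positivity
  have := (((hasDerivAt_id x).const_add 1).inv h1).neg
  exact this.congr_deriv (by simp only [id]; ring)

lemma tends_inv : Tendsto (fun t:ℝ => -(1+t)⁻¹) atTop (nhds 0) := by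
  have : Tendsto (fun t:ℝ => (1+t)) atTop atTop := tendsto_atTop_add_const_left _ _ tendsto_id
  simpa using (tendsto_inv_atTop_zero.comp this).neg

lemma integral_one_add_sq_inv : ∫ t in Ioi (0:ℝ), ((1+t)^2)⁻¹ = 1 := by
  have h := integral_Ioi_of_hasDerivAt_of_nonneg (g := fun t:ℝ => -(1+t)⁻¹)
    (g' := fun t:ℝ => ((1+t)^2)⁻¹) (a := 0) (l := 0)
    (hd_inv 0 self_mem_Ici).continuousAt.continuousWithinAt
    (fun x hx => hd_inv x (mem_Ici.2 (le_of_lt hx))) (fun x hx => by positivity) tends_inv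
  simpa using h

lemma integrable_one_add_sq_inv : IntegrableOn (fun t:ℝ => ((1+t)^2)⁻¹) (Ioi 0) :=
  integrableOn_Ioi_deriv_of_nonneg (g := fun t:ℝ => -(1+t)⁻¹) (l := 0)
    (hd_inv 0 self_mem_Ici).continuousAt.continuousWithinAt
    (fun x hx => hd_inv x (mem_Ici.2 (le_of_lt hx))) (fun x hx => by positivity) tends_inv

noncomputable def fI (p : ℕ) (t : ℝ) : ℝ := Real.exp (-t) * t ^ p / (1 + t) ^ (p + 2)

lemma contOn (p : ℕ) : ContinuousOn (fI p) (Ioi 0) := by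
  apply ContinuousOn.div (Continuous.continuousOn (by continuity))
    (Continuous.continuousOn (by continuity))
  intro x hx
  have : (0:ℝ) < x := hx
  positivity

lemma integrable_fI (p : ℕ) : IntegrableOn (fI p) (Ioi 0) := by
  have hmeas := (contOn p).aestronglyMeasurable (μ := volume) measurableSet_Ioi
  refine Integrable.mono (g := fun t => Real.exp (-1*t)) (exp_neg_integrableOn_Ioi 0 one_pos) hmeas ?_
  filter_upwards [ae_restrict_mem measurableSet_Ioi] with t ht
  have ht0 : (0:ℝ) < t := ht
  rw [Real.norm_eq_abs, Real.norm_eq_abs, abs_of_nonneg (by unfold fI; positivity),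
    abs_of_nonneg (Real.exp_pos _).le, neg_one_mul]
  have h1 : t ^ p ≤ (1+t)^(p+2) := by
    calc t^p ≤ (1+t)^p := pow_le_pow_left₀ ht0.le (by linarith) p
    _ ≤ (1+t)^(p+2) := pow_le_pow_right₀ (by linarith) (by omega)
  unfold fI
  rw [div_le_iff₀ (by positivity)]
  exact mul_le_mul_of_nonneg_left h1 (Real.exp_pos (-t)).le

lemma key_split {p : ℕ} {t : ℝ} (ht : 0 < t) :
    fI p t = Real.exp (-t) * (t/(1+t))^p * ((1+t)^2)⁻¹ := by
  have h1t : (0:ℝ) < 1 + t := by linarith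
  unfold fI
  rw [pow_add, div_pow]
  field_simp

lemma ptUB {p : ℕ} {t : ℝ} (ht : t ∈ Ioi (0:ℝ)) :
    fI p t ≤ Real.exp (1 - 2*Real.sqrt p) * ((1+t)^2)⁻¹ := by
  have ht0 : (0:ℝ) < t := ht
  have h1t : (0:ℝ) < 1 + t := by linarith
  set s := Real.sqrt p with hs
  have hs0 : 0 ≤ s := Real.sqrt_nonneg _
  have hsp : s^2 = p := Real.sq_sqrt (Nat.cast_nonneg p)
  have h2 : (t/(1+t))^p ≤ Real.exp (-(p:ℝ)/(1+t)) := by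
    have hb : t/(1+t) ≤ Real.exp (-(1+t)⁻¹) := by
      have h0 := Real.add_one_le_exp (-(1+t)⁻¹)
      have heq : t/(1+t) = 1 - (1+t)⁻¹ := by field_simp; ring
      linarith
    calc (t/(1+t))^p ≤ (Real.exp (-(1+t)⁻¹))^p := pow_le_pow_left₀ (by positivity) hb p
    _ = Real.exp (-(p:ℝ)/(1+t)) := by
        rw [← Real.exp_nat_mul]; congr 1; field_simp
  have h3 : 2*s - 1 ≤ t + (p:ℝ)/(1+t) := by
    have h4 : 2*s - (1+t) ≤ (p:ℝ)/(1+t) := by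
      rw [le_div_iff₀ h1t]; nlinarith [sq_nonneg (1+t-s)]
    linarith
  rw [key_split ht0]
  have hstep : Real.exp (-t) * (t/(1+t))^p ≤ Real.exp (1 - 2*s) := by
    calc Real.exp (-t) * (t/(1+t))^p ≤ Real.exp (-t) * Real.exp (-(p:ℝ)/(1+t)) := by
          exact mul_le_mul_of_nonneg_left h2 (Real.exp_pos _).le
    _ = Real.exp (-t + -(p:ℝ)/(1+t)) := (Real.exp_add _ _).symm
    _ ≤ Real.exp (1 - 2*s) := by
          apply Real.exp_le_exp.2
          have : -(p:ℝ)/(1+t) = -((p:ℝ)/(1+t)) := by ring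
          linarith [h3]
  calc Real.exp (-t) * (t/(1+t))^p * ((1+t)^2)⁻¹
      ≤ Real.exp (1 - 2*s) * ((1+t)^2)⁻¹ :=
        mul_le_mul_of_nonneg_right hstep (by positivity)

lemma I_le (p : ℕ) :
    ∫ t in Ioi (0:ℝ), fI p t ≤ Real.exp (1 - 2*Real.sqrt p) := by
  have h := setIntegral_mono_on (integrable_fI p)
    (integrable_one_add_sq_inv.const_mul _) measurableSet_Ioi (fun x hx => ptUB hx)
  calc ∫ t in Ioi (0:ℝ), fI p t
      ≤ ∫ t in Ioi (0:ℝ), Real.exp (1 - 2*Real.sqrt p) * ((1+t)^2)⁻¹ := h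
  _ = Real.exp (1 - 2*Real.sqrt p) * ∫ t in Ioi (0:ℝ), ((1+t)^2)⁻¹ := integral_const_mul _ _
  _ = Real.exp (1 - 2*Real.sqrt p) := by rw [integral_one_add_sq_inv, mul_one]

lemma ptLB {p : ℕ} (hp : 1 ≤ p) {t : ℝ}
    (ht : t ∈ Ioc (Real.sqrt p) (Real.sqrt p + 1)) :
    Real.exp (-(2*Real.sqrt p + 1)) / (2 + Real.sqrt p)^2 ≤ fI p t := by
  set s := Real.sqrt p with hs
  have hs1 : 1 ≤ s := by
    rw [hs, show (1:ℝ) = Real.sqrt 1 by simp]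
    exact Real.sqrt_le_sqrt (by exact_mod_cast hp)
  obtain ⟨ht1, ht2⟩ := ht
  have ht0 : (0:ℝ) < t := lt_of_lt_of_le (by linarith) ht1.le
  have h1t : (0:ℝ) < 1 + t := by linarith
  have hsp : s^2 = p := Real.sq_sqrt (Nat.cast_nonneg p)
  have hexp : Real.exp (-(s+1)) ≤ Real.exp (-t) := Real.exp_le_exp.2 (by linarith)
  have hpow : Real.exp (-s) ≤ (t/(1+t))^p := by
    have hb : Real.exp (-t⁻¹) ≤ t/(1+t) := by
      have h0 := Real.add_one_le_exp t⁻¹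
      have he : Real.exp (-t⁻¹) = (Real.exp t⁻¹)⁻¹ := by rw [Real.exp_neg]
      rw [he]
      rw [inv_le_comm₀ (Real.exp_pos _) (by positivity)]
      calc ((t/(1+t)))⁻¹ = 1 + t⁻¹ := by field_simp; ring
      _ ≤ Real.exp t⁻¹ := by linarith
    calc Real.exp (-s) = Real.exp (-(p:ℝ)/s) := by
          rw [← hsp]; congr 1; field_simp [pow_two]
    _ ≤ Real.exp (-(p:ℝ)/t) := by
          apply Real.exp_le_exp.2
          rw [neg_div, neg_div, neg_le_neg_iff]
          exact div_le_div_of_nonneg_left (Nat.cast_nonneg p) (by linarith) ht1.le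
    _ = (Real.exp (-t⁻¹))^p := by
          rw [← Real.exp_nat_mul]; congr 1; field_simp
    _ ≤ (t/(1+t))^p := pow_le_pow_left₀ (Real.exp_pos _).le hb p
  have hinv : ((2+s)^2)⁻¹ ≤ ((1+t)^2)⁻¹ := by
    apply inv_anti₀ (by positivity)
    have : 1 + t ≤ 2 + s := by linarith
    nlinarith [h1t]
  rw [key_split ht0]
  calc Real.exp (-(2*s + 1)) / (2+s)^2
      = (Real.exp (-(s+1)) * Real.exp (-s)) * ((2+s)^2)⁻¹ := by
        rw [← Real.exp_add]; ring_nf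
  _ ≤ (Real.exp (-t) * (t/(1+t))^p) * ((1+t)^2)⁻¹ := by
        apply mul_le_mul _ hinv (by positivity) (by positivity)
        exact mul_le_mul hexp hpow (Real.exp_pos _).le (Real.exp_pos _).le

lemma I_ge {p : ℕ} (hp : 1 ≤ p) :
    Real.exp (-(2*Real.sqrt p + 1)) / (2 + Real.sqrt p)^2 ≤ ∫ t in Ioi (0:ℝ), fI p t := by
  set s := Real.sqrt p with hs
  have hs1 : 1 ≤ s := by
    rw [hs, show (1:ℝ) = Real.sqrt 1 by simp]
    exact Real.sqrt_le_sqrt (by exact_mod_cast hp)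
  have hsub : Ioc s (s+1) ⊆ Ioi (0:ℝ) := fun x hx => lt_of_lt_of_le (by linarith) hx.1.le
  have step1 : ∫ t in Ioc s (s+1), fI p t ≤ ∫ t in Ioi (0:ℝ), fI p t := by
    apply setIntegral_mono_set (integrable_fI p)
    · filter_upwards [ae_restrict_mem measurableSet_Ioi] with t ht
      have : (0:ℝ) < t := ht
      unfold fI; positivity
    · exact HasSubset.Subset.eventuallyLE hsub
  have step2 : Real.exp (-(2*s + 1)) / (2+s)^2 ≤ ∫ t in Ioc s (s+1), fI p t := by
    have hconst : ∫ t in Ioc s (s+1), (Real.exp (-(2*s + 1)) / (2+s)^2)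
        = Real.exp (-(2*s + 1)) / (2+s)^2 := by
      rw [setIntegral_const, Real.volume_real_Ioc]
      rw [show s + 1 - s = 1 by ring]
      simp
    rw [← hconst]
    apply setIntegral_mono_on (integrableOn_const measure_Ioc_lt_top.ne)
      ((integrable_fI p).mono_set hsub) measurableSet_Ioc
    intro x hx
    exact ptLB hp hx
  linarith

lemma sqrt_tendsto : Tendsto (fun p : ℕ => Real.sqrt p) atTop atTop := by
  apply tendsto_atTop_atTop.2
  intro b
  refine ⟨⌈b⌉₊^2, fun n hn => ?_⟩
  calc b ≤ (⌈b⌉₊ : ℝ) := Nat.le_ceil b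
  _ ≤ Real.sqrt n := by
      rw [Real.le_sqrt (Nat.cast_nonneg _) (Nat.cast_nonneg _)]
      exact_mod_cast hn

lemma log_div_tendsto : Tendsto (fun x : ℝ => Real.log (2+x) / x) atTop (nhds 0) := by
  have h := Real.tendsto_pow_log_div_mul_add_atTop 1 (-2) 1 one_ne_zero
  have h2 : Tendsto (fun x : ℝ => 2+x) atTop atTop :=
    tendsto_atTop_add_const_left _ _ tendsto_id
  have h3 := h.comp h2
  convert h3 using 2 with x
  simp [Function.comp]

lemma g_tendsto : Tendsto (fun p : ℕ => 1/Real.sqrt p + 2*(Real.log (2+Real.sqrt p)/Real.sqrt p))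
    atTop (nhds 0) := by
  have t1 : Tendsto (fun p : ℕ => 1/Real.sqrt p) atTop (nhds 0) := by
    simpa [one_div, Function.comp_def] using tendsto_inv_atTop_zero.comp sqrt_tendsto
  have t2 : Tendsto (fun p : ℕ => Real.log (2+Real.sqrt p)/Real.sqrt p) atTop (nhds 0) :=
    log_div_tendsto.comp sqrt_tendsto
  simpa using t1.add (t2.const_mul 2)

theorem toeplitz_expSymbol_min_eigenvalue_limit :
    Tendsto (fun p : ℕ =>
        (1 / Real.sqrt p) *
          Real.log (((p : ℝ) + 1) *
            ∫ t in Set.Ioi (0 : ℝ), Real.exp (-t) * t ^ p / (1 + t) ^ (p + 2)))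
      atTop (nhds (-2)) := by
  set g : ℕ → ℝ := fun p => 1/Real.sqrt p + 2*(Real.log (2+Real.sqrt p)/Real.sqrt p) with hg
  have hlow : Tendsto (fun p : ℕ => -2 - g p) atTop (nhds (-2)) := by
    simpa [hg, one_div] using (tendsto_const_nhds (x := (-2:ℝ)) (f := atTop (α := ℕ))).sub g_tendsto
  have hup : Tendsto (fun p : ℕ => -2 + g p) atTop (nhds (-2)) := by
    simpa [hg, one_div] using (tendsto_const_nhds (x := (-2:ℝ)) (f := atTop (α := ℕ))).add g_tendsto
  apply tendsto_of_tendsto_of_tendsto_of_le_of_le' hlow hup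
  · -- lower eventual bound
    filter_upwards [eventually_ge_atTop 1] with p hp
    set s := Real.sqrt p with hs
    have hs1 : 1 ≤ s := by
      rw [hs, show (1:ℝ) = Real.sqrt 1 by simp]
      exact Real.sqrt_le_sqrt (by exact_mod_cast hp)
    have hs0 : 0 < s := by linarith
    have hc : (0:ℝ) < Real.exp (-(2*s + 1)) / (2+s)^2 := by positivity
    have hI := I_ge hp
    have hp1 : (1:ℝ) ≤ (p:ℝ) + 1 := by linarith [Nat.cast_nonneg (α := ℝ) p]
    have hIpos : 0 < ∫ t in Ioi (0:ℝ), fI p t := lt_of_lt_of_le hc hI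
    have hle : Real.exp (-(2*s + 1)) / (2+s)^2 ≤ ((p:ℝ)+1) * ∫ t in Ioi (0:ℝ), fI p t := by
      calc Real.exp (-(2*s + 1)) / (2+s)^2 ≤ ∫ t in Ioi (0:ℝ), fI p t := hI
      _ = 1 * ∫ t in Ioi (0:ℝ), fI p t := (one_mul _).symm
      _ ≤ ((p:ℝ)+1) * ∫ t in Ioi (0:ℝ), fI p t :=
          mul_le_mul_of_nonneg_right hp1 hIpos.le
    have hlog := Real.log_le_log hc hle
    have hlogc : Real.log (Real.exp (-(2*s + 1)) / (2+s)^2)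
        = -(2*s+1) - 2*Real.log (2+s) := by
      rw [Real.log_div (Real.exp_ne_zero _) (by positivity), Real.log_exp, Real.log_pow]
      push_cast; ring
    rw [hlogc] at hlog
    have key : -2 - g p = (1/s) * (-(2*s+1) - 2*Real.log (2+s)) := by
      rw [hg]
      field_simp
      ring
    rw [key]
    have := mul_le_mul_of_nonneg_left hlog (le_of_lt (one_div_pos.mpr hs0))
    exact this
  · -- upper eventual bound
    filter_upwards [eventually_ge_atTop 1] with p hp
    set s := Real.sqrt p with hs
    have hs1 : 1 ≤ s := by
      rw [hs, show (1:ℝ) = Real.sqrt 1 by simp]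
      exact Real.sqrt_le_sqrt (by exact_mod_cast hp)
    have hs0 : 0 < s := by linarith
    have hsp : s^2 = p := Real.sq_sqrt (Nat.cast_nonneg p)
    have hc : (0:ℝ) < Real.exp (-(2*s + 1)) / (2+s)^2 := by positivity
    have hIpos : 0 < ∫ t in Ioi (0:ℝ), fI p t := lt_of_lt_of_le hc (I_ge hp)
    have hp0 : (0:ℝ) < (p:ℝ) + 1 := by positivity
    have hprod : 0 < ((p:ℝ)+1) * ∫ t in Ioi (0:ℝ), fI p t := mul_pos hp0 hIpos
    have hle : ((p:ℝ)+1) * (∫ t in Ioi (0:ℝ), fI p t) ≤ ((p:ℝ)+1) * Real.exp (1 - 2*s) :=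
      mul_le_mul_of_nonneg_left (I_le p) hp0.le
    have hlog := Real.log_le_log hprod hle
    rw [Real.log_mul (ne_of_gt hp0) (Real.exp_ne_zero _), Real.log_exp] at hlog
    have hlogp : Real.log ((p:ℝ)+1) ≤ 2*Real.log (2+s) := by
      have hle2 : (p:ℝ)+1 ≤ (2+s)^2 := by nlinarith
      calc Real.log ((p:ℝ)+1) ≤ Real.log ((2+s)^2) := Real.log_le_log hp0 hle2
      _ = 2*Real.log (2+s) := by rw [Real.log_pow]; push_cast; ring
    have hfinal : Real.log (((p:ℝ)+1) * ∫ t in Ioi (0:ℝ), fI p t)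
        ≤ 2*Real.log (2+s) + (1 - 2*s) := by linarith
    have key : -2 + g p = (1/s) * (2*Real.log (2+s) + (1 - 2*s)) := by
      rw [hg]
      field_simp
      ring
    rw [key]
    exact mul_le_mul_of_nonneg_left hfinal (le_of_lt (one_div_pos.mpr hs0))
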